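/- Momentum weight norm formula: if g_0 = v_0, g_k = μ·g_{k−1} + v_k, and w_k = w_{k−1} − λ·g_{k−1} for k ≥ 1, where μ ≠ 1 and the vectors w_0, v_0, v_1, …, v_{k−1} are pairwise orthogonal in a real inner product space, then ‖w_k‖² = ‖w_0‖² + λ²·Σ_{j=0}^{k−1} ((1 − μ^{k−j})/(1 − μ))²·‖v_j‖². -/
import Mathlib


open RealInnerProductSpace

/-- Momentum weight norm formula: with `μ ≠ 1` and `w 0, v 0, v 1, …` pairwise
orthogonal, `‖w k‖² = ‖w 0‖² + λ² ∑_{j<k} ((1 - μ^(k-j))/(1 - μ))² ‖v j‖²`. -/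
theorem momentum_weight_norm_formula
    {E : Type*} [NormedAddCommGroup E] [InnerProductSpace ℝ E]
    (μ lam : ℝ) (hμ : μ ≠ 1) (v g w : ℕ → E)
    (horth : ∀ i j, i ≠ j → ⟪v i, v j⟫ = 0)
    (horthw : ∀ i, ⟪w 0, v i⟫ = 0)
    (hg0 : g 0 = v 0)
    (hg : ∀ k, g (k + 1) = μ • g k + v (k + 1))
    (hw : ∀ k, w (k + 1) = w k - lam • g k) :
    ∀ k, 1 ≤ k →
      ‖w k‖ ^ 2 =
        ‖w 0‖ ^ 2 +
          lam ^ 2 * ∑ j ∈ Finset.range k, ((1 - μ ^ (k - j)) / (1 - μ)) ^ 2 * ‖v j‖ ^ 2 := by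
  -- closed form for g
  have hgk : ∀ k, g k = ∑ j ∈ Finset.range (k + 1), μ ^ (k - j) • v j := by
    intro k
    induction k with
    | zero => simp [hg0]
    | succ k ih =>
        rw [hg k, ih, Finset.sum_range_succ (n := k + 1), Finset.smul_sum]
        congr 1
        · apply Finset.sum_congr rfl
          intro j hj
          rw [Finset.mem_range] at hj
          rw [smul_smul, ← pow_succ']
          congr 2
          omega
        · simp
  -- closed form for w
  have hwk : ∀ k, w k = w 0 -
      lam • ∑ j ∈ Finset.range k, (∑ i ∈ Finset.range (k - j), μ ^ i) • v j := by
    intro k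
    induction k with
    | zero => simp
    | succ k ih =>
        rw [hw k, ih, hgk k, sub_sub, ← smul_add]
        congr 2
        have h2 : ∀ j ∈ Finset.range k,
            (∑ i ∈ Finset.range (k + 1 - j), μ ^ i) • v j
              = (∑ i ∈ Finset.range (k - j), μ ^ i) • v j + μ ^ (k - j) • v j := by
          intro j hj
          rw [Finset.mem_range] at hj
          have : k + 1 - j = (k - j) + 1 := by omega
          rw [this, Finset.sum_range_succ, add_smul]
        conv_rhs => rw [Finset.sum_range_succ]
        rw [Finset.sum_congr rfl h2, Finset.sum_add_distrib, Finset.sum_range_succ]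
        simp only [Nat.sub_self, Nat.add_sub_cancel_left, pow_zero, one_smul,
          Finset.range_one, Finset.sum_singleton]
        abel
  intro k _
  rw [hwk k]
  set a : ℕ → ℝ := fun j => ∑ i ∈ Finset.range (k - j), μ ^ i with ha
  set s : E := ∑ j ∈ Finset.range k, a j • v j with hs
  have hinner : ⟪w 0, s⟫ = 0 := by
    rw [hs, inner_sum]
    apply Finset.sum_eq_zero
    intro j _
    rw [real_inner_smul_right, horthw j, mul_zero]
  have hnorm_s : ‖s‖ ^ 2 = ∑ j ∈ Finset.range k, (a j) ^ 2 * ‖v j‖ ^ 2 := by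
    rw [← real_inner_self_eq_norm_sq, hs, inner_sum]
    apply Finset.sum_congr rfl
    intro j hj
    rw [sum_inner]
    rw [Finset.sum_eq_single j]
    · rw [real_inner_smul_left, real_inner_smul_right, real_inner_self_eq_norm_sq]
      ring
    · intro i _ hij
      rw [real_inner_smul_left, real_inner_smul_right, horth i j hij]
      ring
    · intro h; exact absurd hj h
  have key : ‖w 0 - lam • s‖ ^ 2 = ‖w 0‖ ^ 2 + lam ^ 2 * ‖s‖ ^ 2 := by
    rw [norm_sub_sq_real, real_inner_smul_right, hinner, norm_smul]
    simp only [mul_pow, sq_abs, Real.norm_eq_abs]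
    ring
  rw [key, hnorm_s]
  congr 1
  congr 1
  apply Finset.sum_congr rfl
  intro j _
  have hμ1 : μ - 1 ≠ 0 := sub_ne_zero.mpr hμ
  have hμ2 : (1 : ℝ) - μ ≠ 0 := sub_ne_zero.mpr (Ne.symm hμ)
  have : a j = (1 - μ ^ (k - j)) / (1 - μ) := by
    rw [ha]
    simp only
    rw [geom_sum_eq hμ]
    field_simp
    ring
  rw [this]
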